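/- Let a < 0, c < 0, and let f : (a,1) → ℝ be differentiable with derivative bounded on every compact subinterval of (a,1). Then for every ε > 0 and every x with max(a,c) < x < 1 − ε one has ∫_x^{1−ε} f(t)/((t−c)·√((t−a)(t−x))) dt = (1/√(x−c)) · ∫_x^{1−ε} (1/((t−a)·√(t−c))) · ( √(1−a−ε)·f(1−ε)/√(1−t−ε) − ∫_t^{1−ε} √(u−a)·f′(u)/√(u−t) du ) dt. -/

import Mathlib

open Set MeasureTheory Real intervalIntegral


lemma mobius_sub (α x u : ℝ) (hα : α < x) (hxu : x < u) (g : ℝ → ℝ) :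
    ∫ τ in Set.Ioo x u, g τ =
      ∫ t in Set.Ioo x u, ((x - α) * (u - α) / (t - α) ^ 2) * g (x + (x - α) * (u - t) / (t - α)) := by
  set φ : ℝ → ℝ := fun t => x + (x - α) * (u - t) / (t - α) with hφdef
  have hxα : x - α ≠ 0 := by intro h; linarith
  have huα : u - α ≠ 0 := by intro h; linarith
  have hxα' : (0:ℝ) < x - α := by linarith
  have huα' : (0:ℝ) < u - α := by linarith
  have hA : ∀ t, t - α ≠ 0 → φ t - α = (x - α) * (u - α) / (t - α) := by
    intro t ht; simp only [hφdef]; field_simp; ring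
  have hB : ∀ t, t - α ≠ 0 → u - φ t = (t - x) * (u - α) / (t - α) := by
    intro t ht; simp only [hφdef]; field_simp; ring
  have hC : ∀ t, t - α ≠ 0 → φ t - x = (x - α) * (u - t) / (t - α) := by
    intro t ht; simp only [hφdef]; ring
  have hne : ∀ t ∈ Set.Ioo x u, t - α ≠ 0 := fun t ht => by
    have := ht.1; intro h; nlinarith
  have hmaps : ∀ t ∈ Set.Ioo x u, φ t ∈ Set.Ioo x u := by
    intro t ht
    obtain ⟨ht1, ht2⟩ := ht
    have h2 : (0:ℝ) < t - α := by linarith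
    constructor
    · rw [← sub_pos, hC t (ne_of_gt h2)]
      have hut : (0:ℝ) < u - t := by linarith
      positivity
    · rw [← sub_pos, hB t (ne_of_gt h2)]
      have htx : (0:ℝ) < t - x := by linarith
      positivity
  have hinv : ∀ t ∈ Set.Ioo x u, φ (φ t) = t := by
    intro t ht
    have h2 : t - α ≠ 0 := hne t ht
    have h2' : φ t - α ≠ 0 := hne _ (hmaps t ht)
    have e1 := hA t h2
    have e2 := hB t h2
    have e0 : φ (φ t) - x = (x - α) * (u - φ t) / (φ t - α) := hC _ h2'
    rw [e1, e2] at e0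
    have e3 : (x - α) * ((t - x) * (u - α) / (t - α)) / ((x - α) * (u - α) / (t - α)) = t - x := by
      field_simp
    rw [e3] at e0
    linarith
  have hinj : Set.InjOn φ (Set.Ioo x u) := by
    intro s hs t ht hst
    have h1 := hinv s hs
    rw [hst, hinv t ht] at h1
    exact h1.symm
  have himg : φ '' Set.Ioo x u = Set.Ioo x u := by
    apply Set.Subset.antisymm
    · rintro _ ⟨t, ht, rfl⟩; exact hmaps t ht
    · intro t ht; exact ⟨φ t, hmaps t ht, hinv t ht⟩
  have hderiv : ∀ t ∈ Set.Ioo x u, HasDerivWithinAt φ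
      (-((x - α) * (u - α)) / (t - α) ^ 2) (Set.Ioo x u) t := by
    intro t ht
    have h2 : t - α ≠ 0 := hne t ht
    have : HasDerivAt φ (-((x - α) * (u - α)) / (t - α) ^ 2) t := by
      have h₁ : HasDerivAt (fun t : ℝ => (x - α) * (u - t)) (-(x - α)) t := by
        simpa using (((hasDerivAt_id t).const_sub u).const_mul (x - α))
      have h₂ : HasDerivAt (fun t : ℝ => t - α) 1 t := by
        simpa using (hasDerivAt_id t).sub_const α
      have := (h₁.div h₂ h2).const_add x
      exact this.congr_deriv (by ring)
    exact this.hasDerivWithinAt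
  calc ∫ τ in Set.Ioo x u, g τ = ∫ τ in φ '' Set.Ioo x u, g τ := by rw [himg]
    _ = ∫ t in Set.Ioo x u, |(-((x - α) * (u - α)) / (t - α) ^ 2)| • g (φ t) :=
        integral_image_eq_integral_abs_deriv_smul measurableSet_Ioo hderiv hinj g
    _ = ∫ t in Set.Ioo x u, ((x - α) * (u - α) / (t - α) ^ 2) * g (φ t) := by
        apply setIntegral_congr_fun measurableSet_Ioo
        intro t ht
        have h2 : (0:ℝ) < (t - α) ^ 2 := by
          have := hne t ht; positivity
        simp only [smul_eq_mul]
        rw [abs_div, abs_neg, abs_of_pos (by positivity : (0:ℝ) < (x - α) * (u - α)),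
          abs_of_pos h2]

lemma refl_sub (x u : ℝ) (hxu : x ≤ u) (g : ℝ → ℝ) :
    ∫ t in Set.Ioo x u, g t = ∫ t in Set.Ioo x u, g (x + u - t) := by
  have h1 : ∫ t in Set.Ioo x u, g t = ∫ t in x..u, g t := by
    rw [intervalIntegral.integral_of_le hxu, integral_Ioc_eq_integral_Ioo]
  have h2 : ∫ t in Set.Ioo x u, g (x + u - t) = ∫ t in x..u, g (x + u - t) := by
    rw [intervalIntegral.integral_of_le hxu, integral_Ioc_eq_integral_Ioo]
  rw [h1, h2, intervalIntegral.integral_comp_sub_left g (x + u)]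
  norm_num

lemma key_identity (a c x u : ℝ) (hax : a < x) (hcx : c < x) (hxu : x < u) :
    Real.sqrt (x - c) * ∫ t in Set.Ioo x u, ((t - c) * Real.sqrt ((t - a) * (t - x)))⁻¹
      = Real.sqrt (u - a) *
        ∫ t in Set.Ioo x u, ((t - a) * Real.sqrt (t - c) * Real.sqrt (u - t))⁻¹ := by
  have hxa : (0:ℝ) < x - a := by linarith
  have hxc : (0:ℝ) < x - c := by linarith
  have hua : (0:ℝ) < u - a := by linarith
  have huc : (0:ℝ) < u - c := by linarith
  set L : ℝ → ℝ := fun t => (x - c) * (t - a) + (x - a) * (u - t) with hL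
  set L' : ℝ → ℝ := fun t => (x - a) * (t - c) + (x - c) * (u - t) with hL'
  -- Step 1
  have step1 : ∫ t in Set.Ioo x u, ((t - c) * Real.sqrt ((t - a) * (t - x)))⁻¹
      = Real.sqrt (u - a) * ∫ t in Set.Ioo x u, (L t * Real.sqrt (u - t))⁻¹ := by
    rw [mobius_sub a x u hax hxu _, ← MeasureTheory.integral_const_mul]
    apply setIntegral_congr_fun measurableSet_Ioo
    intro t ht
    dsimp only
    obtain ⟨ht1, ht2⟩ := ht
    have hT : (0:ℝ) < t - a := by linarith
    have hut : (0:ℝ) < u - t := by linarith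
    have htx : (0:ℝ) < t - x := by linarith
    have hLt : (0:ℝ) < L t := by
      simp only [hL]; nlinarith
    set φt := x + (x - a) * (u - t) / (t - a) with hφt
    have e1 : φt - c = L t / (t - a) := by simp only [hφt, hL]; field_simp; ring
    have e2 : (φt - a) * (φt - x) = ((x - a) / (t - a)) ^ 2 * ((u - a) * (u - t)) := by
      have ea : φt - a = (x - a) * (u - a) / (t - a) := by
        simp only [hφt]; field_simp; ring
      have ex : φt - x = (x - a) * (u - t) / (t - a) := by
        simp only [hφt]; ring
      rw [ea, ex]; field_simp
    have e3 : Real.sqrt ((φt - a) * (φt - x))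
        = (x - a) / (t - a) * (Real.sqrt (u - a) * Real.sqrt (u - t)) := by
      rw [e2, Real.sqrt_mul (sq_nonneg _), Real.sqrt_sq (by positivity),
        Real.sqrt_mul hua.le]
    rw [e1, e3]
    set su := Real.sqrt (u - a) with hsudef
    set st := Real.sqrt (u - t) with hstdef
    have hsu : su ≠ 0 := by rw [hsudef]; positivity
    have hst : st ≠ 0 := by rw [hstdef]; positivity
    have hmul : su * su = u - a := Real.mul_self_sqrt hua.le
    rw [← hmul]
    have hT' : t - a ≠ 0 := ne_of_gt hT
    have hL0 : L t ≠ 0 := ne_of_gt hLt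
    have hxa' : x - a ≠ 0 := ne_of_gt hxa
    field_simp
  -- Step 2
  have step2 : ∫ t in Set.Ioo x u, ((t - a) * Real.sqrt (t - c) * Real.sqrt (u - t))⁻¹
      = Real.sqrt (x - c) * ∫ t in Set.Ioo x u, (L' t * Real.sqrt (t - x))⁻¹ := by
    rw [mobius_sub c x u hcx hxu _, ← MeasureTheory.integral_const_mul]
    apply setIntegral_congr_fun measurableSet_Ioo
    intro t ht
    dsimp only
    obtain ⟨ht1, ht2⟩ := ht
    have hS : (0:ℝ) < t - c := by linarith
    have hut : (0:ℝ) < u - t := by linarith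
    have htx : (0:ℝ) < t - x := by linarith
    have hLt : (0:ℝ) < L' t := by
      simp only [hL']; nlinarith
    set ψt := x + (x - c) * (u - t) / (t - c) with hψt
    have e1 : ψt - a = L' t / (t - c) := by simp only [hψt, hL']; field_simp; ring
    have e2 : (ψt - c) * (u - ψt) = ((u - c) / (t - c)) ^ 2 * ((x - c) * (t - x)) := by
      have ec : ψt - c = (x - c) * (u - c) / (t - c) := by
        simp only [hψt]; field_simp; ring
      have eu : u - ψt = (t - x) * (u - c) / (t - c) := by
        simp only [hψt]; field_simp; ring
      rw [ec, eu]; field_simp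
    have ecnn : (0:ℝ) ≤ ψt - c := by
      have ec : ψt - c = (x - c) * (u - c) / (t - c) := by
        simp only [hψt]; field_simp; ring
      rw [ec]; positivity
    have e3 : Real.sqrt (ψt - c) * Real.sqrt (u - ψt)
        = (u - c) / (t - c) * (Real.sqrt (x - c) * Real.sqrt (t - x)) := by
      rw [← Real.sqrt_mul ecnn, e2, Real.sqrt_mul (sq_nonneg _), Real.sqrt_sq (by positivity),
        Real.sqrt_mul hxc.le]
    rw [mul_assoc, e1, e3]
    set sxc := Real.sqrt (x - c) with hsxcdef
    set stx := Real.sqrt (t - x) with hstxdef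
    have hsxc : sxc ≠ 0 := by rw [hsxcdef]; positivity
    have hstx : stx ≠ 0 := by rw [hstxdef]; positivity
    have hmul : sxc * sxc = x - c := Real.mul_self_sqrt hxc.le
    rw [← hmul]
    have hS' : t - c ≠ 0 := ne_of_gt hS
    have hL0 : L' t ≠ 0 := ne_of_gt hLt
    have huc' : u - c ≠ 0 := ne_of_gt huc
    field_simp
  -- Step 3: reflection
  have step3 : ∫ t in Set.Ioo x u, (L t * Real.sqrt (u - t))⁻¹
      = ∫ t in Set.Ioo x u, (L' t * Real.sqrt (t - x))⁻¹ := by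
    rw [refl_sub x u hxu.le (fun t => (L t * Real.sqrt (u - t))⁻¹)]
    apply setIntegral_congr_fun measurableSet_Ioo
    intro t _
    dsimp only
    have h1 : L (x + u - t) = L' t := by simp only [hL, hL']; ring
    have h2 : u - (x + u - t) = t - x := by ring
    rw [h1, h2]
  rw [step1, step2, step3]
  ring


lemma inv_sqrt_eq_rpow {s : ℝ} (hs : 0 ≤ s) : (Real.sqrt s)⁻¹ = s ^ (-(1/2) : ℝ) := by
  rw [Real.sqrt_eq_rpow, ← Real.rpow_neg hs]

lemma int_rpow_left (x b : ℝ) :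
    IntegrableOn (fun t : ℝ => (t - x) ^ (-(1/2) : ℝ)) (Set.Ioo x b) := by
  have h : IntervalIntegrable (fun t : ℝ => t ^ (-(1/2) : ℝ)) volume 0 (b - x) :=
    intervalIntegrable_rpow' (by norm_num)
  have h2 := h.comp_sub_right x
  simp only [zero_add, sub_add_cancel] at h2
  rcases le_or_gt x b with hxb | hxb
  · have := (intervalIntegrable_iff_integrableOn_Ioo_of_le hxb).mp h2
    exact this
  · simp [Set.Ioo_eq_empty (by linarith : ¬ x < b)]

lemma int_rpow_right (x b : ℝ) :
    IntegrableOn (fun t : ℝ => (b - t) ^ (-(1/2) : ℝ)) (Set.Ioo x b) := by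
  have h : IntervalIntegrable (fun t : ℝ => t ^ (-(1/2) : ℝ)) volume 0 (b - x) :=
    intervalIntegrable_rpow' (by norm_num)
  have h2 := h.comp_sub_left b
  simp only [sub_zero, sub_sub_cancel] at h2
  rcases le_or_gt x b with hxb | hxb
  · exact (intervalIntegrable_iff_integrableOn_Ioo_of_le hxb).mp h2.symm
  · simp [Set.Ioo_eq_empty (by linarith : ¬ x < b)]

lemma eval_rpow (t b : ℝ) (h : t ≤ b) :
    ∫ u in Set.Ioo t b, (u - t) ^ (-(1/2) : ℝ) = 2 * (b - t) ^ ((1/2) : ℝ) := by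
  rw [← integral_Ioc_eq_integral_Ioo, ← intervalIntegral.integral_of_le h,
    intervalIntegral.integral_comp_sub_right (fun s => s ^ (-(1/2):ℝ)) t, sub_self,
    integral_rpow (Or.inl (by norm_num))]
  rw [Real.zero_rpow (by norm_num)]
  norm_num
  ring

lemma rpow_neg_half_of_nonpos {s : ℝ} (h : s ≤ 0) : s ^ (-(1/2) : ℝ) = 0 := by
  rcases lt_or_eq_of_le h with h' | h'
  · rw [Real.rpow_def_of_neg h']
    have : Real.cos (-(1/2) * π) = 0 := by
      rw [show (-(1/2) : ℝ) * π = -(π/2) by ring, Real.cos_neg, Real.cos_pi_div_two]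
    rw [this, mul_zero]
  · rw [h', Real.zero_rpow (by norm_num)]


lemma int_rpow_left' (t x b : ℝ) :
    IntegrableOn (fun u : ℝ => (u - t) ^ (-(1/2) : ℝ)) (Set.Ioo x b) := by
  apply IntegrableOn.mono_set (t := Set.Iic t ∪ Set.Ioo t b)
  · apply IntegrableOn.union
    · exact integrableOn_zero.congr_fun
        (fun u hu => (rpow_neg_half_of_nonpos (by simp only [Set.mem_Iic] at hu; linarith)).symm)
        measurableSet_Iic
    · exact int_rpow_left t b
  · intro u hu
    rcases le_or_gt u t with h | h
    · exact Or.inl h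
    · exact Or.inr ⟨h, hu.2⟩

lemma eval_rpow' (t x b : ℝ) (hxt : x ≤ t) (htb : t ≤ b) :
    ∫ u in Set.Ioo x b, (u - t) ^ (-(1/2) : ℝ) ≤ 2 * (b - x) ^ ((1/2) : ℝ) := by
  have hset : Set.Ioi t ∩ Set.Ioo x b = Set.Ioo t b := by
    ext u
    simp only [Set.mem_inter_iff, Set.mem_Ioi, Set.mem_Ioo]
    constructor
    · rintro ⟨h1, _, h3⟩; exact ⟨h1, h3⟩
    · rintro ⟨h1, h2⟩; exact ⟨h1, lt_of_le_of_lt hxt h1, h2⟩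
  have hpt : ∀ u : ℝ, (u - t) ^ (-(1/2) : ℝ)
      = (Set.Ioi t).indicator (fun u : ℝ => (u - t) ^ (-(1/2) : ℝ)) u := by
    intro u
    rcases lt_or_ge t u with h | h
    · rw [Set.indicator_of_mem (Set.mem_Ioi.mpr h)]
    · rw [Set.indicator_of_notMem (by simp [h])]
      exact rpow_neg_half_of_nonpos (by linarith)
  have h1 : ∫ u in Set.Ioo x b, (u - t) ^ (-(1/2) : ℝ)
      = ∫ u in Set.Ioo t b, (u - t) ^ (-(1/2) : ℝ) := by
    calc ∫ u in Set.Ioo x b, (u - t) ^ (-(1/2) : ℝ)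
        = ∫ u in Set.Ioo x b, (Set.Ioi t).indicator (fun u : ℝ => (u - t) ^ (-(1/2) : ℝ)) u := by
          exact setIntegral_congr_fun measurableSet_Ioo (fun u _ => hpt u)
      _ = ∫ u in Set.Ioi t ∩ Set.Ioo x b, (u - t) ^ (-(1/2) : ℝ) := by
          rw [MeasureTheory.integral_indicator measurableSet_Ioi,
            Measure.restrict_restrict measurableSet_Ioi]
      _ = ∫ u in Set.Ioo t b, (u - t) ^ (-(1/2) : ℝ) := by rw [hset]
  rw [h1, eval_rpow t b htb]
  have : (b - t) ^ ((1/2) : ℝ) ≤ (b - x) ^ ((1/2) : ℝ) :=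
    Real.rpow_le_rpow (by linarith) (by linarith) (by norm_num)
  linarith


set_option maxHeartbeats 2000000 in
/-- Lemma 4.3 (Convolution1c): for `a < 0`, `c < 0`, `f` differentiable on `(a,1)`
with locally bounded derivative, `ε > 0` and `max a c < x < 1 - ε`,
`∫_x^{1-ε} f(t)/((t-c)·√((t-a)(t-x))) dt
  = (1/√(x-c)) ∫_x^{1-ε} 1/((t-a)·√(t-c)) ·
      (√(1-a-ε)·f(1-ε)/√(1-t-ε) - ∫_t^{1-ε} √(u-a)·f'(u)/√(u-t) du) dt`. -/
theorem stmt_2 (a c : ℝ) (ha : a < 0) (hc : c < 0) (f : ℝ → ℝ)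
    (hdiff : ∀ t ∈ Set.Ioo a 1, DifferentiableAt ℝ f t)
    (hbdd : ∀ p q : ℝ, a < p → q < 1 →
      ∃ M : ℝ, ∀ t ∈ Set.Icc p q, |deriv f t| ≤ M)
    (ε : ℝ) (hε0 : 0 < ε)
    (x : ℝ) (hx : max a c < x) (hx1 : x < 1 - ε) :
    (∫ t in x..(1 - ε), f t / ((t - c) * Real.sqrt ((t - a) * (t - x)))) =
      (Real.sqrt (x - c))⁻¹ *
        ∫ t in x..(1 - ε), ((t - a) * Real.sqrt (t - c))⁻¹ *
          (Real.sqrt (1 - a - ε) * f (1 - ε) / Real.sqrt (1 - t - ε)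
            - ∫ u in t..(1 - ε), Real.sqrt (u - a) * deriv f u / Real.sqrt (u - t)) := by
  have hax : a < x := lt_of_le_of_lt (le_max_left a c) hx
  have hcx : c < x := lt_of_le_of_lt (le_max_right a c) hx
  set b : ℝ := 1 - ε with hbdef
  have hxb : x < b := hx1
  have hb1 : b < 1 := by rw [hbdef]; linarith
  have hab : a < b := lt_trans hax hxb
  have hcb : c < b := lt_trans hcx hxb
  simp only [show (1:ℝ) - a - ε = b - a from by rw [hbdef]; ring,
    show ∀ t : ℝ, (1:ℝ) - t - ε = b - t from fun t => by rw [hbdef]; ring]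
  -- basic positivity
  have hxa : (0:ℝ) < x - a := by linarith
  have hxc : (0:ℝ) < x - c := by linarith
  have hsxc : Real.sqrt (x - c) ≠ 0 := by positivity
  -- bound on deriv
  obtain ⟨M₀, hM₀⟩ := hbdd x b hax hb1
  set M : ℝ := max M₀ 0 with hMdef
  have hM0 : (0:ℝ) ≤ M := le_max_right _ _
  have hMb : ∀ u ∈ Set.Icc x b, |deriv f u| ≤ M := fun u hu =>
    (hM₀ u hu).trans (le_max_left _ _)
  -- kernels
  set k : ℝ → ℝ := fun t => ((t - c) * Real.sqrt ((t - a) * (t - x)))⁻¹ with hkdef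
  -- measurability of kernels
  have hkm : Measurable k := by
    apply Measurable.inv
    exact ((measurable_id.sub_const c).mul
      (((measurable_id.sub_const a).mul (measurable_id.sub_const x)).sqrt))
  have hgm : Measurable (deriv f) := measurable_deriv f
  -- W and J
  set W : ℝ → ℝ := fun u => ∫ t in Set.Ioo x u, k t with hWdef
  set J : ℝ → ℝ := fun u =>
    ∫ t in Set.Ioo x u, ((t - a) * Real.sqrt (t - c) * Real.sqrt (u - t))⁻¹ with hJdef
  have hkey : ∀ u, x < u → Real.sqrt (x - c) * W u = Real.sqrt (u - a) * J u :=
    fun u hu => key_identity a c x u hax hcx hu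
  -- integrability of k
  have hkint : IntegrableOn k (Set.Ioo x b) := by
    apply Integrable.mono'
      (g := fun t => ((x - c) * Real.sqrt (x - a))⁻¹ * (t - x) ^ (-(1/2) : ℝ))
      ((int_rpow_left x b).const_mul _) hkm.aestronglyMeasurable
    apply (ae_restrict_iff' measurableSet_Ioo).mpr (Filter.Eventually.of_forall ?_)
    intro t ht
    obtain ⟨ht1, ht2⟩ := ht
    have htc : (0:ℝ) < t - c := by linarith
    have hta : (0:ℝ) < t - a := by linarith
    have htx : (0:ℝ) < t - x := by linarith
    have hkpos : (0:ℝ) ≤ k t := by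
      rw [hkdef]; positivity
    rw [Real.norm_eq_abs, abs_of_nonneg hkpos, ← inv_sqrt_eq_rpow htx.le, ← mul_inv]
    rw [hkdef]
    dsimp only
    rw [Real.sqrt_mul hta.le]
    apply inv_anti₀
    · positivity
    · have h1 : Real.sqrt (x - a) ≤ Real.sqrt (t - a) := Real.sqrt_le_sqrt (by linarith)
      have h2 : (0:ℝ) ≤ Real.sqrt (t - x) := Real.sqrt_nonneg _
      have h3 : (x - c) * Real.sqrt (x - a) ≤ (t - c) * Real.sqrt (t - a) :=
        mul_le_mul (by linarith) h1 (Real.sqrt_nonneg _) (by linarith)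
      calc (x - c) * Real.sqrt (x - a) * Real.sqrt (t - x)
          ≤ (t - c) * Real.sqrt (t - a) * Real.sqrt (t - x) :=
            mul_le_mul_of_nonneg_right h3 h2
        _ = (t - c) * (Real.sqrt (t - a) * Real.sqrt (t - x)) := by ring
  -- FTC
  have hgint : ∀ t ∈ Set.Ioo x b, IntervalIntegrable (deriv f) volume t b := by
    intro t ht
    rw [intervalIntegrable_iff_integrableOn_Ioc_of_le ht.2.le]
    apply Integrable.mono' (g := fun _ => M)
      (integrableOn_const measure_Ioc_lt_top.ne) hgm.aestronglyMeasurable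
    apply (ae_restrict_iff' measurableSet_Ioc).mpr (Filter.Eventually.of_forall ?_)
    intro u hu
    rw [Real.norm_eq_abs]
    exact hMb u ⟨le_of_lt (lt_of_lt_of_le ht.1 hu.1.le), hu.2⟩
  have hftc : ∀ t ∈ Set.Ioo x b, f b - f t = ∫ u in Set.Ioo t b, deriv f u := by
    intro t ht
    have hder : ∀ u ∈ Set.uIcc t b, HasDerivAt f (deriv f u) u := by
      intro u hu
      rw [Set.uIcc_of_le ht.2.le] at hu
      exact (hdiff u ⟨by linarith [hu.1, ht.1], by linarith [hu.2]⟩).hasDerivAt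
    have := intervalIntegral.integral_eq_sub_of_hasDerivAt hder (hgint t ht)
    rw [intervalIntegral.integral_of_le ht.2.le, integral_Ioc_eq_integral_Ioo] at this
    exact this.symm
  -- LHS
  -- f bounded on Icc x b
  have hfcont : ContinuousOn f (Set.Icc x b) := fun t ht =>
    ((hdiff t ⟨by linarith [ht.1], by linarith [ht.2]⟩).continuousAt).continuousWithinAt
  obtain ⟨Mf, hMf⟩ := (isCompact_Icc).exists_bound_of_continuousOn hfcont
  have hfint : IntegrableOn (fun t => f t * k t) (Set.Ioo x b) := by
    apply Integrable.mono' (g := fun t => Mf * |k t|)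
      (hkint.abs.const_mul Mf)
      (((hfcont.mono Set.Ioo_subset_Icc_self).aestronglyMeasurable measurableSet_Ioo).mul
        hkm.aestronglyMeasurable)
    apply (ae_restrict_iff' measurableSet_Ioo).mpr (Filter.Eventually.of_forall ?_)
    intro t ht
    simp only [Pi.mul_apply, Real.norm_eq_abs, abs_mul]
    exact mul_le_mul_of_nonneg_right (by simpa using hMf t (Set.Ioo_subset_Icc_self ht))
      (abs_nonneg _)
  -- the Fubini kernel for the LHS
  set Fp : ℝ × ℝ → ℝ :=
    (Set.indicator {p : ℝ × ℝ | p.1 < p.2} (fun p => k p.1 * deriv f p.2)) with hFpdef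
  have hFm : Measurable Fp :=
    Measurable.indicator ((hkm.comp measurable_fst).mul (hgm.comp measurable_snd))
      (measurableSet_lt measurable_fst measurable_snd)
  have hFbound : ∀ t : ℝ, ∀ u ∈ Set.Ioo x b, ‖Fp (t, u)‖ ≤ |k t| * M := by
    intro t u hu
    rw [Real.norm_eq_abs]
    by_cases h : t < u
    · rw [hFpdef, Set.indicator_of_mem (by exact h : (t,u) ∈ {p : ℝ × ℝ | p.1 < p.2}), abs_mul]
      exact mul_le_mul_of_nonneg_left (hMb u (Set.Ioo_subset_Icc_self hu)) (abs_nonneg _)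
    · rw [hFpdef, Set.indicator_of_notMem (by exact h : (t,u) ∉ {p : ℝ × ℝ | p.1 < p.2}),
        abs_zero]
      positivity
  have hconst : Integrable (fun _ : ℝ => |1| * M) (volume.restrict (Set.Ioo x b)) :=
    integrableOn_const measure_Ioo_lt_top.ne
  have hFint : Integrable Fp
      ((volume.restrict (Set.Ioo x b)).prod (volume.restrict (Set.Ioo x b))) := by
    rw [integrable_prod_iff hFm.aestronglyMeasurable]
    constructor
    · apply Filter.Eventually.of_forall
      intro t
      apply Integrable.mono' (g := fun _ => |k t| * M)
        (integrableOn_const measure_Ioo_lt_top.ne)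
        ((hFm.comp (measurable_prodMk_left)).aestronglyMeasurable)
      exact (ae_restrict_iff' measurableSet_Ioo).mpr (Filter.Eventually.of_forall (hFbound t))
    · apply Integrable.mono' (g := fun t => |k t| * (M * (b - x)))
        (hkint.abs.mul_const _)
        (hFm.aestronglyMeasurable.norm.integral_prod_right')
      apply Filter.Eventually.of_forall
      intro t
      have h0 : (0:ℝ) ≤ ∫ u, ‖Fp (t, u)‖ ∂(volume.restrict (Set.Ioo x b)) :=
        integral_nonneg (fun u => norm_nonneg _)
      rw [Real.norm_eq_abs, abs_of_nonneg h0]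
      calc ∫ u, ‖Fp (t, u)‖ ∂(volume.restrict (Set.Ioo x b))
          ≤ ∫ _ , |k t| * M ∂(volume.restrict (Set.Ioo x b)) := by
            apply integral_mono_of_nonneg (Filter.Eventually.of_forall fun u => norm_nonneg _)
              (integrableOn_const measure_Ioo_lt_top.ne)
            exact (ae_restrict_iff' measurableSet_Ioo).mpr
              (Filter.Eventually.of_forall (hFbound t))
        _ = (volume (Set.Ioo x b)).toReal * (|k t| * M) := by
            rw [MeasureTheory.integral_const, measureReal_restrict_apply_univ, smul_eq_mul]; rfl
        _ ≤ |k t| * (M * (b - x)) := by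
            rw [Real.volume_Ioo, ENNReal.toReal_ofReal (by linarith)]
            ring_nf
            exact le_refl _
  have hswap := MeasureTheory.integral_integral_swap (f := fun t u => Fp (t, u))
    (μ := volume.restrict (Set.Ioo x b)) (ν := volume.restrict (Set.Ioo x b)) hFint
  have hleft : ∫ t in Set.Ioo x b, (∫ u in Set.Ioo x b, Fp (t, u))
      = ∫ t in Set.Ioo x b, k t * (f b - f t) := by
    apply setIntegral_congr_fun measurableSet_Ioo
    intro t ht
    have hsl : (fun u => Fp (t, u)) = (Set.Ioi t).indicator (fun u => k t * deriv f u) := by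
      funext u
      rw [hFpdef]
      by_cases h : t < u
      · rw [Set.indicator_of_mem (by exact h : (t,u) ∈ {p : ℝ × ℝ | p.1 < p.2}),
          Set.indicator_of_mem (Set.mem_Ioi.mpr h)]
      · rw [Set.indicator_of_notMem (by exact h : (t,u) ∉ {p : ℝ × ℝ | p.1 < p.2}),
          Set.indicator_of_notMem (by simpa using h)]
    have hset : Set.Ioi t ∩ Set.Ioo x b = Set.Ioo t b := by
      ext u
      simp only [Set.mem_inter_iff, Set.mem_Ioi, Set.mem_Ioo]
      exact ⟨fun ⟨h1, _, h3⟩ => ⟨h1, h3⟩, fun ⟨h1, h2⟩ => ⟨h1, lt_trans ht.1 h1, h2⟩⟩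
    dsimp only
    rw [hsl, MeasureTheory.integral_indicator measurableSet_Ioi,
      Measure.restrict_restrict measurableSet_Ioi, hset,
      MeasureTheory.integral_const_mul, ← hftc t ht]
  have hright : ∫ u in Set.Ioo x b, (∫ t in Set.Ioo x b, Fp (t, u))
      = ∫ u in Set.Ioo x b, deriv f u * W u := by
    apply setIntegral_congr_fun measurableSet_Ioo
    intro u hu
    have hsl : (fun t => Fp (t, u)) = (Set.Iio u).indicator (fun t => k t * deriv f u) := by
      funext t
      rw [hFpdef]
      by_cases h : t < u
      · rw [Set.indicator_of_mem (by exact h : (t,u) ∈ {p : ℝ × ℝ | p.1 < p.2}),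
          Set.indicator_of_mem (Set.mem_Iio.mpr h)]
      · rw [Set.indicator_of_notMem (by exact h : (t,u) ∉ {p : ℝ × ℝ | p.1 < p.2}),
          Set.indicator_of_notMem (by simpa using h)]
    have hset : Set.Iio u ∩ Set.Ioo x b = Set.Ioo x u := by
      ext t
      simp only [Set.mem_inter_iff, Set.mem_Iio, Set.mem_Ioo]
      exact ⟨fun ⟨h1, h2, _⟩ => ⟨h2, h1⟩, fun ⟨h1, h2⟩ => ⟨h2, h1, lt_trans h2 hu.2⟩⟩
    dsimp only
    rw [hsl, MeasureTheory.integral_indicator measurableSet_Iio,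
      Measure.restrict_restrict measurableSet_Iio, hset,
      MeasureTheory.integral_mul_const]
    rw [hWdef]
    ring
  have hsplit : ∫ t in Set.Ioo x b, k t * (f b - f t)
      = f b * W b - ∫ t in Set.Ioo x b, f t * k t := by
    have e : ∀ t, k t * (f b - f t) = f b * k t - f t * k t := fun t => by ring
    simp only [e]
    rw [MeasureTheory.integral_sub (hkint.const_mul (f b)) hfint,
      MeasureTheory.integral_const_mul]
  have hLHS : (∫ t in x..b, f t / ((t - c) * Real.sqrt ((t - a) * (t - x))))
      = f b * W b - ∫ u in Set.Ioo x b, deriv f u * W u := by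
    rw [intervalIntegral.integral_of_le hxb.le, integral_Ioc_eq_integral_Ioo]
    have e : ∫ t in Set.Ioo x b, f t / ((t - c) * Real.sqrt ((t - a) * (t - x)))
        = ∫ t in Set.Ioo x b, f t * k t := by
      apply setIntegral_congr_fun measurableSet_Ioo
      intro t _
      dsimp only
      rw [div_eq_mul_inv]
    rw [e, ← hright, ← hswap, hleft, hsplit]
    ring
  -- RHS
  -- RHS machinery
  set m : ℝ → ℝ := fun t => ((t - a) * Real.sqrt (t - c))⁻¹ with hmdef
  have hmm : Measurable m :=
    (((measurable_id.sub_const a)).mul ((measurable_id.sub_const c).sqrt)).inv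
  set Cm : ℝ := ((x - a) * Real.sqrt (x - c))⁻¹ with hCmdef
  have hCm0 : (0:ℝ) ≤ Cm := by rw [hCmdef]; positivity
  have hmb : ∀ t ∈ Set.Ioo x b, |m t| ≤ Cm := by
    intro t ht
    have hta : (0:ℝ) < t - a := by linarith [ht.1]
    have htc : (0:ℝ) < t - c := by linarith [ht.1]
    have hmpos : (0:ℝ) ≤ m t := by rw [hmdef]; positivity
    rw [abs_of_nonneg hmpos, hmdef, hCmdef]
    apply inv_anti₀
    · positivity
    · exact mul_le_mul (by linarith [ht.1]) (Real.sqrt_le_sqrt (by linarith [ht.1]))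
        (Real.sqrt_nonneg _) (by linarith [ht.1])
  have hmalg0 : ∀ B A s : ℝ, B⁻¹ * (A / s) = A * (B * s)⁻¹ := fun B A s => by
    rw [mul_inv, div_eq_mul_inv]; ring
  have hmalg : ∀ t u A : ℝ, m t * (A / Real.sqrt (u - t))
      = A * ((t - a) * Real.sqrt (t - c) * Real.sqrt (u - t))⁻¹ := fun t u A =>
    hmalg0 ((t - a) * Real.sqrt (t - c)) A (Real.sqrt (u - t))
  set CG : ℝ := Cm * (Real.sqrt (b - a) * M) with hCGdef
  have hCG0 : (0:ℝ) ≤ CG := by rw [hCGdef]; positivity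
  set Gp : ℝ × ℝ → ℝ := (Set.indicator {p : ℝ × ℝ | p.1 < p.2}
    (fun p => m p.1 * (Real.sqrt (p.2 - a) * deriv f p.2 / Real.sqrt (p.2 - p.1)))) with hGpdef
  have hGm : Measurable Gp := by
    apply Measurable.indicator
    · exact (hmm.comp measurable_fst).mul
        ((((measurable_snd.sub_const a).sqrt).mul (hgm.comp measurable_snd)).div
          ((measurable_snd.sub measurable_fst).sqrt))
    · exact measurableSet_lt measurable_fst measurable_snd
  have hGbound : ∀ t ∈ Set.Ioo x b, ∀ u ∈ Set.Ioo x b,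
      ‖Gp (t, u)‖ ≤ CG * (u - t) ^ (-(1/2) : ℝ) := by
    intro t ht u hu
    rw [Real.norm_eq_abs]
    by_cases h : t < u
    · rw [hGpdef, Set.indicator_of_mem (by exact h : (t,u) ∈ {p : ℝ × ℝ | p.1 < p.2})]
      have hut : (0:ℝ) < u - t := by linarith
      rw [abs_mul, abs_div, abs_mul, hCGdef]
      rw [← inv_sqrt_eq_rpow hut.le, div_eq_mul_inv]
      have h1 : |Real.sqrt (u - a)| ≤ Real.sqrt (b - a) := by
        rw [abs_of_nonneg (Real.sqrt_nonneg _)]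
        exact Real.sqrt_le_sqrt (by linarith [hu.2])
      have h2 : |deriv f u| ≤ M := hMb u (Set.Ioo_subset_Icc_self hu)
      have h3 : |Real.sqrt (u - t)| = Real.sqrt (u - t) := abs_of_nonneg (Real.sqrt_nonneg _)
      rw [h3]
      have h4 : |Real.sqrt (u - a)| * |deriv f u| ≤ Real.sqrt (b - a) * M :=
        mul_le_mul h1 h2 (abs_nonneg _) (Real.sqrt_nonneg _)
      have h5 : |m t| * (|Real.sqrt (u - a)| * |deriv f u|) ≤ Cm * (Real.sqrt (b - a) * M) :=
        mul_le_mul (hmb t ht) h4 (by positivity) hCm0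
      calc |m t| * (|Real.sqrt (u - a)| * |deriv f u| * (Real.sqrt (u - t))⁻¹)
          = |m t| * (|Real.sqrt (u - a)| * |deriv f u|) * (Real.sqrt (u - t))⁻¹ := by ring
        _ ≤ Cm * (Real.sqrt (b - a) * M) * (Real.sqrt (u - t))⁻¹ :=
            mul_le_mul_of_nonneg_right h5 (by positivity)
    · rw [hGpdef, Set.indicator_of_notMem (by exact h : (t,u) ∉ {p : ℝ × ℝ | p.1 < p.2}),
        abs_zero, rpow_neg_half_of_nonpos (by linarith [not_lt.mp h])]
      simp
  have hGslice : ∀ t ∈ Set.Ioo x b,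
      Integrable (fun u => Gp (t, u)) (volume.restrict (Set.Ioo x b)) := by
    intro t ht
    apply Integrable.mono' (g := fun u => CG * (u - t) ^ (-(1/2) : ℝ))
      ((int_rpow_left' t x b).const_mul CG)
      ((hGm.comp measurable_prodMk_left).aestronglyMeasurable)
    exact (ae_restrict_iff' measurableSet_Ioo).mpr
      (Filter.Eventually.of_forall (fun u hu => hGbound t ht u hu))
  have hGint : Integrable Gp
      ((volume.restrict (Set.Ioo x b)).prod (volume.restrict (Set.Ioo x b))) := by
    rw [integrable_prod_iff hGm.aestronglyMeasurable]
    constructor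
    · exact (ae_restrict_iff' measurableSet_Ioo).mpr
        (Filter.Eventually.of_forall (fun t ht => hGslice t ht))
    · apply Integrable.mono' (g := fun _ => CG * (2 * (b - x) ^ ((1/2) : ℝ)))
        (integrableOn_const measure_Ioo_lt_top.ne)
        (hGm.aestronglyMeasurable.norm.integral_prod_right')
      apply (ae_restrict_iff' measurableSet_Ioo).mpr (Filter.Eventually.of_forall ?_)
      intro t ht
      have h0 : (0:ℝ) ≤ ∫ u, ‖Gp (t, u)‖ ∂(volume.restrict (Set.Ioo x b)) :=
        integral_nonneg (fun u => norm_nonneg _)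
      rw [Real.norm_eq_abs, abs_of_nonneg h0]
      calc ∫ u, ‖Gp (t, u)‖ ∂(volume.restrict (Set.Ioo x b))
          ≤ ∫ u in Set.Ioo x b, CG * (u - t) ^ (-(1/2) : ℝ) := by
            apply integral_mono_of_nonneg (Filter.Eventually.of_forall fun u => norm_nonneg _)
              ((int_rpow_left' t x b).const_mul CG)
            exact (ae_restrict_iff' measurableSet_Ioo).mpr
              (Filter.Eventually.of_forall (fun u hu => hGbound t ht u hu))
        _ = CG * ∫ u in Set.Ioo x b, (u - t) ^ (-(1/2) : ℝ) := MeasureTheory.integral_const_mul _ _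
        _ ≤ CG * (2 * (b - x) ^ ((1/2) : ℝ)) :=
            mul_le_mul_of_nonneg_left (eval_rpow' t x b ht.1.le ht.2.le) hCG0
  have hGswap := MeasureTheory.integral_integral_swap (f := fun t u => Gp (t, u))
    (μ := volume.restrict (Set.Ioo x b)) (ν := volume.restrict (Set.Ioo x b)) hGint
  -- left slice evaluation
  have hGleft : ∀ t ∈ Set.Ioo x b, (∫ u in Set.Ioo x b, Gp (t, u))
      = m t * ∫ u in t..b, Real.sqrt (u - a) * deriv f u / Real.sqrt (u - t) := by
    intro t ht
    have hsl : (fun u => Gp (t, u)) = (Set.Ioi t).indicator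
        (fun u => m t * (Real.sqrt (u - a) * deriv f u / Real.sqrt (u - t))) := by
      funext u
      rw [hGpdef]
      by_cases h : t < u
      · rw [Set.indicator_of_mem (by exact h : (t,u) ∈ {p : ℝ × ℝ | p.1 < p.2}),
          Set.indicator_of_mem (Set.mem_Ioi.mpr h)]
      · rw [Set.indicator_of_notMem (by exact h : (t,u) ∉ {p : ℝ × ℝ | p.1 < p.2}),
          Set.indicator_of_notMem (by simpa using h)]
    have hset : Set.Ioi t ∩ Set.Ioo x b = Set.Ioo t b := by
      ext u
      simp only [Set.mem_inter_iff, Set.mem_Ioi, Set.mem_Ioo]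
      exact ⟨fun ⟨h1, _, h3⟩ => ⟨h1, h3⟩, fun ⟨h1, h2⟩ => ⟨h1, lt_trans ht.1 h1, h2⟩⟩
    rw [hsl, MeasureTheory.integral_indicator measurableSet_Ioi,
      Measure.restrict_restrict measurableSet_Ioi, hset,
      MeasureTheory.integral_const_mul,
      intervalIntegral.integral_of_le ht.2.le, integral_Ioc_eq_integral_Ioo]
  -- right slice evaluation
  have hGright : ∫ u in Set.Ioo x b, (∫ t in Set.Ioo x b, Gp (t, u))
      = ∫ u in Set.Ioo x b, Real.sqrt (u - a) * deriv f u * J u := by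
    apply setIntegral_congr_fun measurableSet_Ioo
    intro u hu
    have hsl : (fun t => Gp (t, u)) = (Set.Iio u).indicator
        (fun t => m t * (Real.sqrt (u - a) * deriv f u / Real.sqrt (u - t))) := by
      funext t
      rw [hGpdef]
      by_cases h : t < u
      · rw [Set.indicator_of_mem (by exact h : (t,u) ∈ {p : ℝ × ℝ | p.1 < p.2}),
          Set.indicator_of_mem (Set.mem_Iio.mpr h)]
      · rw [Set.indicator_of_notMem (by exact h : (t,u) ∉ {p : ℝ × ℝ | p.1 < p.2}),
          Set.indicator_of_notMem (by simpa using h)]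
    have hset : Set.Iio u ∩ Set.Ioo x b = Set.Ioo x u := by
      ext t
      simp only [Set.mem_inter_iff, Set.mem_Iio, Set.mem_Ioo]
      exact ⟨fun ⟨h1, h2, _⟩ => ⟨h2, h1⟩, fun ⟨h1, h2⟩ => ⟨h2, h1, lt_trans h2 hu.2⟩⟩
    dsimp only
    rw [hsl, MeasureTheory.integral_indicator measurableSet_Iio,
      Measure.restrict_restrict measurableSet_Iio, hset]
    have e : ∫ t in Set.Ioo x u, m t * (Real.sqrt (u - a) * deriv f u / Real.sqrt (u - t))
        = ∫ t in Set.Ioo x u, (Real.sqrt (u - a) * deriv f u) *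
            ((t - a) * Real.sqrt (t - c) * Real.sqrt (u - t))⁻¹ :=
      setIntegral_congr_fun measurableSet_Ioo (fun t _ => hmalg t u _)
    rw [e, MeasureTheory.integral_const_mul, hJdef]
  -- integrability of the two RHS pieces
  have hint1 : IntegrableOn
      (fun t => m t * (Real.sqrt (b - a) * f b / Real.sqrt (b - t))) (Set.Ioo x b) := by
    have hm1 : Measurable (fun t : ℝ => m t * (Real.sqrt (b - a) * f b / Real.sqrt (b - t))) :=
      hmm.mul (measurable_const.div ((measurable_const.sub measurable_id).sqrt))
    apply Integrable.mono'
      (g := fun t => (Cm * (Real.sqrt (b - a) * |f b|)) * (b - t) ^ (-(1/2) : ℝ))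
      ((int_rpow_right x b).const_mul _) hm1.aestronglyMeasurable
    apply (ae_restrict_iff' measurableSet_Ioo).mpr (Filter.Eventually.of_forall ?_)
    intro t ht
    have hbt : (0:ℝ) < b - t := by linarith [ht.2]
    rw [Real.norm_eq_abs, abs_mul, abs_div, abs_mul,
      abs_of_nonneg (Real.sqrt_nonneg (b - a)), abs_of_nonneg (Real.sqrt_nonneg (b - t)),
      ← inv_sqrt_eq_rpow hbt.le, div_eq_mul_inv]
    calc |m t| * (Real.sqrt (b - a) * |f b| * (Real.sqrt (b - t))⁻¹)
        = (Real.sqrt (b - a) * |f b| * (Real.sqrt (b - t))⁻¹) * |m t| := by ring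
      _ ≤ (Real.sqrt (b - a) * |f b| * (Real.sqrt (b - t))⁻¹) * Cm :=
          mul_le_mul_of_nonneg_left (hmb t ht) (by positivity)
      _ = Cm * (Real.sqrt (b - a) * |f b|) * (Real.sqrt (b - t))⁻¹ := by ring
  have hint2 : IntegrableOn (fun t => m t *
      ∫ u in t..b, Real.sqrt (u - a) * deriv f u / Real.sqrt (u - t)) (Set.Ioo x b) := by
    apply (hGint.integral_prod_left).congr
    exact (ae_restrict_mem measurableSet_Ioo).mono (fun t ht => hGleft t ht)
  have hRHS : (∫ t in x..b, ((t - a) * Real.sqrt (t - c))⁻¹ *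
          (Real.sqrt (b - a) * f b / Real.sqrt (b - t)
            - ∫ u in t..b, Real.sqrt (u - a) * deriv f u / Real.sqrt (u - t)))
      = Real.sqrt (b - a) * f b * J b
        - ∫ u in Set.Ioo x b, Real.sqrt (u - a) * deriv f u * J u := by
    rw [intervalIntegral.integral_of_le hxb.le, integral_Ioc_eq_integral_Ioo]
    have e0 : ∫ t in Set.Ioo x b, ((t - a) * Real.sqrt (t - c))⁻¹ *
          (Real.sqrt (b - a) * f b / Real.sqrt (b - t)
            - ∫ u in t..b, Real.sqrt (u - a) * deriv f u / Real.sqrt (u - t))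
        = (∫ t in Set.Ioo x b, m t * (Real.sqrt (b - a) * f b / Real.sqrt (b - t)))
          - ∫ t in Set.Ioo x b, m t *
              ∫ u in t..b, Real.sqrt (u - a) * deriv f u / Real.sqrt (u - t) := by
      rw [← MeasureTheory.integral_sub hint1 hint2]
      apply setIntegral_congr_fun measurableSet_Ioo
      intro t _
      dsimp only
      ring
    rw [e0]
    have e1 : (∫ t in Set.Ioo x b, m t * (Real.sqrt (b - a) * f b / Real.sqrt (b - t)))
        = Real.sqrt (b - a) * f b * J b := by
      have e : ∫ t in Set.Ioo x b, m t * (Real.sqrt (b - a) * f b / Real.sqrt (b - t))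
          = ∫ t in Set.Ioo x b, (Real.sqrt (b - a) * f b) *
              ((t - a) * Real.sqrt (t - c) * Real.sqrt (b - t))⁻¹ :=
        setIntegral_congr_fun measurableSet_Ioo (fun t _ => hmalg t b _)
      rw [e, MeasureTheory.integral_const_mul, hJdef]
    have e2 : (∫ t in Set.Ioo x b, m t *
          ∫ u in t..b, Real.sqrt (u - a) * deriv f u / Real.sqrt (u - t))
        = ∫ u in Set.Ioo x b, Real.sqrt (u - a) * deriv f u * J u := by
      rw [← hGright, ← hGswap]
      exact (setIntegral_congr_fun measurableSet_Ioo (fun t ht => (hGleft t ht).symm))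
    rw [e1, e2]
  rw [hLHS, hRHS]
  -- use key identity
  have e1 : Real.sqrt (b - a) * f b * J b = Real.sqrt (x - c) * (f b * W b) := by
    rw [show Real.sqrt (b - a) * f b * J b = f b * (Real.sqrt (b - a) * J b) from by ring,
      ← hkey b hxb]; ring
  have e2 : (∫ u in Set.Ioo x b, Real.sqrt (u - a) * deriv f u * J u)
      = Real.sqrt (x - c) * ∫ u in Set.Ioo x b, deriv f u * W u := by
    rw [← MeasureTheory.integral_const_mul]
    apply setIntegral_congr_fun measurableSet_Ioo
    intro u hu
    dsimp only
    rw [show Real.sqrt (u - a) * deriv f u * J u = deriv f u * (Real.sqrt (u - a) * J u) from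
      by ring, ← hkey u hu.1]
    ring
  rw [e1, e2, mul_sub, inv_mul_cancel_left₀ hsxc, inv_mul_cancel_left₀ hsxc]
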